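/- In the ODE system P' = −βPS + αa(1−γ)SX/(S+Δ) − ωP, S' = ρ(t)S(1−S/K) − aSX/(S+Δ), X' = βPS + αaγSX/(S+Δ) − μX, with all parameters nonnegative, Δ > 0, K > 0, and bounded measurable ρ(t) ∈ [0, ρ̄], the nonnegative octant { (P,S,X) : P ≥ 0, S ≥ 0, X ≥ 0 } is positively invariant, and moreover S(t) ≤ max(S(0), K) for all t ≥ 0. -/

import Mathlib

set_option maxHeartbeats 1000000

open Set Filter Topology

lemma deriv_nonpos_left_min {f : ℝ → ℝ} {d t₀ : ℝ}
    (hf : HasDerivAt f d t₀) (ht₀ : 0 < t₀) (h0 : f t₀ = 0)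
    (hpos : ∀ s, 0 ≤ s → s < t₀ → 0 < f s) : d ≤ 0 := by
  by_contra hd
  push_neg at hd
  have hslope := hasDerivAt_iff_tendsto_slope.mp hf
  have h1 : ∀ᶠ s in 𝓝[≠] t₀, 0 < slope f t₀ s :=
    hslope.eventually (eventually_gt_nhds hd)
  have h2 : ∀ᶠ s in 𝓝[<] t₀, 0 < slope f t₀ s :=
    h1.filter_mono (nhdsWithin_mono _ (fun x hx => ne_of_lt hx))
  have h3 : Ioo 0 t₀ ∈ 𝓝[<] t₀ := Ioo_mem_nhdsLT_of_mem ⟨ht₀, le_refl _⟩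
  obtain ⟨s, hs1, hs2⟩ := (h2.and (eventually_of_mem h3 (fun x hx => hx))).exists
  have hfs := hpos s hs2.1.le hs2.2
  have hneg : slope f t₀ s < 0 := by
    rw [slope_def_field, h0]
    apply div_neg_of_pos_of_neg <;> [linarith; linarith [hs2.2]]
  linarith

lemma pos_pair {f g f' g' : ℝ → ℝ} {T : ℝ}
    (hf : ∀ t, HasDerivAt f (f' t) t) (hg : ∀ t, HasDerivAt g (g' t) t)
    (hf0 : 0 < f 0) (hg0 : 0 < g 0)
    (keyf : ∀ t, 0 < t → t ≤ T → f t = 0 → 0 ≤ g t → 0 < f' t)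
    (keyg : ∀ t, 0 < t → t ≤ T → g t = 0 → 0 ≤ f t → 0 < g' t) :
    ∀ t, 0 ≤ t → t ≤ T → 0 < f t ∧ 0 < g t := by
  have hfc : Continuous f := continuous_iff_continuousAt.mpr fun s => (hf s).continuousAt
  have hgc : Continuous g := continuous_iff_continuousAt.mpr fun s => (hg s).continuousAt
  intro t ht0 htT
  by_contra hcon
  set B : Set ℝ := (Icc 0 T) ∩ ({x | f x ≤ 0} ∪ {x | g x ≤ 0}) with hBdef
  have htB : t ∈ B := by
    refine ⟨⟨ht0, htT⟩, ?_⟩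
    push_neg at hcon
    by_cases hft : 0 < f t
    · exact Or.inr (hcon hft)
    · exact Or.inl (not_lt.mp hft)
  have hBclosed : IsClosed B :=
    (isClosed_Icc).inter ((isClosed_le hfc continuous_const).union
      (isClosed_le hgc continuous_const))
  have hBne : B.Nonempty := ⟨t, htB⟩
  have hBbdd : BddBelow B := ⟨0, fun x hx => hx.1.1⟩
  set t₀ := sInf B with ht₀def
  have ht₀B : t₀ ∈ B := hBclosed.csInf_mem hBne hBbdd
  have ht₀0 : 0 ≤ t₀ := ht₀B.1.1
  have ht₀T : t₀ ≤ T := ht₀B.1.2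
  have hbefore : ∀ s, 0 ≤ s → s < t₀ → 0 < f s ∧ 0 < g s := by
    intro s hs0 hst
    by_contra hc
    have hsB : s ∈ B := by
      refine ⟨⟨hs0, hst.le.trans ht₀T⟩, ?_⟩
      push_neg at hc
      by_cases hfs : 0 < f s
      · exact Or.inr (hc hfs)
      · exact Or.inl (not_lt.mp hfs)
    exact absurd (csInf_le hBbdd hsB) (not_le.mpr hst)
  have ht₀pos : 0 < t₀ := by
    rcases ht₀0.lt_or_eq with h | h
    · exact h
    · exfalso
      rcases ht₀B.2 with h2 | h2 <;> rw [← h] at h2 <;>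
        simp only [mem_setOf_eq] at h2 <;> linarith
  have hft₀ : 0 ≤ f t₀ := by
    have htd : Tendsto f (𝓝[<] t₀) (𝓝 (f t₀)) :=
      (hfc.tendsto t₀).mono_left nhdsWithin_le_nhds
    refine ge_of_tendsto htd ?_
    filter_upwards [Ioo_mem_nhdsLT_of_mem (⟨ht₀pos, le_refl _⟩ : t₀ ∈ Ioc 0 t₀)]
      with s hs
    exact (hbefore s hs.1.le hs.2).1.le
  have hgt₀ : 0 ≤ g t₀ := by
    have htd : Tendsto g (𝓝[<] t₀) (𝓝 (g t₀)) :=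
      (hgc.tendsto t₀).mono_left nhdsWithin_le_nhds
    refine ge_of_tendsto htd ?_
    filter_upwards [Ioo_mem_nhdsLT_of_mem (⟨ht₀pos, le_refl _⟩ : t₀ ∈ Ioc 0 t₀)]
      with s hs
    exact (hbefore s hs.1.le hs.2).2.le
  rcases ht₀B.2 with h2 | h2
  · have hfz : f t₀ = 0 := le_antisymm h2 hft₀
    have hd1 := keyf t₀ ht₀pos ht₀T hfz hgt₀
    have hd2 := deriv_nonpos_left_min (hf t₀) ht₀pos hfz
      (fun s a b => (hbefore s a b).1)
    linarith
  · have hgz : g t₀ = 0 := le_antisymm h2 hgt₀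
    have hd1 := keyg t₀ ht₀pos ht₀T hgz hft₀
    have hd2 := deriv_nonpos_left_min (hg t₀) ht₀pos hgz
      (fun s a b => (hbefore s a b).2)
    linarith

/-- For the plant–nematode season model
`P' = -βPS + αa(1-γ)SX/(S+Δ) - ωP`, `S' = ρ(t)S(1-S/K) - aSX/(S+Δ)`,
`X' = βPS + αaγSX/(S+Δ) - μX`, with nonnegative parameters, `Δ, K > 0` and
`0 ≤ ρ(t) ≤ ρ̄`, the nonnegative octant is positively invariant and
`S(t) ≤ max (S 0) K` for all `t ≥ 0`. -/
theorem octant_invariant_and_S_bounded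
    (β α a γ ω μ Δ K ρbar : ℝ)
    (hβ : 0 ≤ β) (hα : 0 ≤ α) (ha : 0 ≤ a) (hγ0 : 0 ≤ γ) (hγ1 : γ ≤ 1)
    (hω : 0 ≤ ω) (hμ : 0 ≤ μ) (hΔ : 0 < Δ) (hK : 0 < K) (hρbar : 0 ≤ ρbar)
    (ρ : ℝ → ℝ) (hρ : ∀ t, 0 ≤ ρ t ∧ ρ t ≤ ρbar)
    (P S X : ℝ → ℝ)
    (hP : ∀ t, HasDerivAt P
      (-β * P t * S t + α * a * (1 - γ) * (S t * X t) / (S t + Δ) - ω * P t) t)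
    (hS : ∀ t, HasDerivAt S
      (ρ t * S t * (1 - S t / K) - a * (S t * X t) / (S t + Δ)) t)
    (hX : ∀ t, HasDerivAt X
      (β * P t * S t + α * a * γ * (S t * X t) / (S t + Δ) - μ * X t) t)
    (hP0 : 0 ≤ P 0) (hS0 : 0 ≤ S 0) (hX0 : 0 ≤ X 0) :
    ∀ t : ℝ, 0 ≤ t →
      0 ≤ P t ∧ 0 ≤ S t ∧ 0 ≤ X t ∧ S t ≤ max (S 0) K := by
  intro t ht
  have hPc : Continuous P := continuous_iff_continuousAt.mpr fun s => (hP s).continuousAt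
  have hSc : Continuous S := continuous_iff_continuousAt.mpr fun s => (hS s).continuousAt
  have hXc : Continuous X := continuous_iff_continuousAt.mpr fun s => (hX s).continuousAt
  obtain ⟨C₁, hC₁⟩ := (isCompact_Icc : IsCompact (Icc (0:ℝ) t)).exists_bound_of_continuousOn
    hSc.continuousOn
  obtain ⟨C₂, hC₂⟩ := (isCompact_Icc : IsCompact (Icc (0:ℝ) t)).exists_bound_of_continuousOn
    hXc.continuousOn
  obtain ⟨C, hCdef⟩ : ∃ C : ℝ, C = max (max C₁ C₂) 0 := ⟨_, rfl⟩
  have hC0 : 0 ≤ C := by rw [hCdef]; exact le_max_right _ _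
  have hSC : ∀ s, 0 ≤ s → s ≤ t → |S s| ≤ C := by
    intro s h1 h2
    have := hC₁ s ⟨h1, h2⟩
    rw [Real.norm_eq_abs] at this
    rw [hCdef]
    exact this.trans ((le_max_left _ _).trans (le_max_left _ _))
  have hXC : ∀ s, 0 ≤ s → s ≤ t → |X s| ≤ C := by
    intro s h1 h2
    have := hC₂ s ⟨h1, h2⟩
    rw [Real.norm_eq_abs] at this
    rw [hCdef]
    exact this.trans ((le_max_right _ _).trans (le_max_left _ _))
  -- Stage 1 : `S` is nonnegative on `[0, t]`.
  have stage1 : ∀ s, 0 ≤ s → s ≤ t → 0 ≤ S s := by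
    intro s hs0 hst
    by_contra hneg
    push_neg at hneg
    obtain ⟨L, hLdef⟩ : ∃ L : ℝ, L = ρbar * (1 + C/K) + 2*a*C/Δ + 1 := ⟨_, rfl⟩
    have hCK : 0 ≤ C/K := div_nonneg hC0 hK.le
    have haCΔ : 0 ≤ 2*a*C/Δ := by positivity
    have hL0 : 0 < L := by
      rw [hLdef]
      nlinarith [mul_nonneg hρbar (by linarith : (0:ℝ) ≤ 1 + C/K)]
    have hexpt : 0 < Real.exp (L*t) := Real.exp_pos _
    have hexps : 0 < Real.exp (L*s) := Real.exp_pos _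
    obtain ⟨ε, hεdef⟩ : ∃ ε : ℝ,
        ε = min (Δ/(4*Real.exp (L*t))) ((-S s)/(2*Real.exp (L*s))) := ⟨_, rfl⟩
    have hε0 : 0 < ε := by
      rw [hεdef]
      exact lt_min (by positivity) (div_pos (by linarith) (by positivity))
    set F : ℝ → ℝ := fun u => S u + ε * Real.exp (L*u) with hFdef
    set F' : ℝ → ℝ := fun u =>
      (ρ u * S u * (1 - S u / K) - a * (S u * X u) / (S u + Δ)) + ε * (L * Real.exp (L*u))
      with hF'def
    have hF : ∀ u, HasDerivAt F (F' u) u := by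
      intro u
      have h0 : HasDerivAt (fun y : ℝ => L * y) L u := by
        simpa using (hasDerivAt_id u).const_mul L
      have h1 : HasDerivAt (fun y : ℝ => ε * Real.exp (L*y)) (ε * (L * Real.exp (L*u))) u := by
        have h2 := (h0.exp).const_mul ε
        exact h2.congr_deriv (by ring)
      exact (hS u).add h1
    have hF0 : 0 < F 0 := by
      show 0 < S 0 + ε * Real.exp (L*0)
      rw [mul_zero, Real.exp_zero]
      linarith
    have key : ∀ u, 0 < u → u ≤ t → F u = 0 → 0 ≤ F u → 0 < F' u := by
      intro u hu0 hut hFu _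
      obtain ⟨δ, hδdef⟩ : ∃ δ : ℝ, δ = ε * Real.exp (L*u) := ⟨_, rfl⟩
      have hδ0 : 0 < δ := by rw [hδdef]; positivity
      have hSu : S u = -δ := by
        have h := hFu
        simp only [hFdef] at h
        rw [hδdef]
        linarith
      have hδΔ : δ < Δ/2 := by
        have h1 : Real.exp (L*u) ≤ Real.exp (L*t) :=
          Real.exp_le_exp.mpr (mul_le_mul_of_nonneg_left hut hL0.le)
        have h2 : ε ≤ Δ/(4*Real.exp (L*t)) := by
          rw [hεdef]
          exact min_le_left _ _
        have h3 : δ ≤ (Δ/(4*Real.exp (L*t))) * Real.exp (L*t) := by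
          rw [hδdef]
          exact mul_le_mul h2 h1 (Real.exp_pos _).le (by positivity)
        have h4 : (Δ/(4*Real.exp (L*t))) * Real.exp (L*t) = Δ/4 := by
          field_simp
        linarith

      have hδC : δ ≤ C := by
        have h := hSC u hu0.le hut
        rw [hSu, abs_neg, abs_of_pos hδ0] at h
        exact h
      obtain ⟨hXl, hXr⟩ := abs_le.mp (hXC u hu0.le hut)
      have hρu := hρ u
      have he : ε * (L * Real.exp (L*u)) = L * δ := by rw [hδdef]; ring
      have hterm2 : a * (S u * X u) / (S u + Δ) ≤ (2*a*C/Δ) * δ := by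
        rw [hSu]
        have h1 : a * (-δ * X u) ≤ a*δ*C := by
          nlinarith [mul_nonneg (mul_nonneg ha hδ0.le) (by linarith : 0 ≤ C + X u)]
        have h2 : a * (-δ * X u) / (-δ + Δ) ≤ (a*δ*C) / (Δ/2) :=
          div_le_div₀ (by positivity) h1 (by linarith) (by linarith)
        have h3 : (a*δ*C)/(Δ/2) = (2*a*C/Δ)*δ := by field_simp
        linarith
      have hterm1 : -(ρbar*(1+C/K) * δ) ≤ ρ u * S u * (1 - S u / K) := by
        rw [hSu]
        have hdk : δ/K ≤ C/K := by gcongr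
        have hrw : ρ u * -δ * (1 - -δ / K) = -(ρ u * δ) - ρ u * δ * (δ/K) := by ring
        rw [hrw]
        nlinarith [mul_nonneg (sub_nonneg.2 hρu.2) hδ0.le,
          mul_nonneg (mul_nonneg hρu.1 hδ0.le) (sub_nonneg.2 hdk),
          mul_nonneg (mul_nonneg (sub_nonneg.2 hρu.2) hδ0.le) hCK]
      have hLδ : L * δ = ρbar*(1+C/K)*δ + (2*a*C/Δ)*δ + δ := by rw [hLdef]; ring
      show 0 < (ρ u * S u * (1 - S u / K) - a * (S u * X u) / (S u + Δ))
        + ε * (L * Real.exp (L*u))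
      rw [he]
      linarith
    have hpos := (pos_pair hF hF hF0 hF0 key key s hs0 hst).1
    have h1 : ε ≤ (-S s)/(2*Real.exp (L*s)) := by
      rw [hεdef]
      exact min_le_right _ _
    have h2 : ε * Real.exp (L*s) ≤ (-S s)/2 := by
      have h3 := mul_le_mul_of_nonneg_right h1 hexps.le
      have h4 : (-S s)/(2*Real.exp (L*s)) * Real.exp (L*s) = (-S s)/2 := by
        field_simp
      linarith
    have h5 : F s = S s + ε * Real.exp (L*s) := rfl
    rw [h5] at hpos
    linarith
  -- Stage 2 : `P` and `X` are nonnegative on `[0, t]`.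
  have stage2 : ∀ s, 0 ≤ s → s ≤ t → 0 ≤ P s ∧ 0 ≤ X s := by
    obtain ⟨L, hLdef⟩ : ∃ L : ℝ, L = α*a + β*C + 1 := ⟨_, rfl⟩
    have hL0 : 0 < L := by
      rw [hLdef]
      nlinarith [mul_nonneg hα ha, mul_nonneg hβ hC0]
    have main : ∀ ε, 0 < ε → ∀ s, 0 ≤ s → s ≤ t →
        0 < P s + ε * Real.exp (L*s) ∧ 0 < X s + ε * Real.exp (L*s) := by
      intro ε hε0
      set F : ℝ → ℝ := fun u => P u + ε * Real.exp (L*u) with hFdef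
      set G : ℝ → ℝ := fun u => X u + ε * Real.exp (L*u) with hGdef
      set F' : ℝ → ℝ := fun u =>
        (-β * P u * S u + α * a * (1-γ) * (S u * X u) / (S u + Δ) - ω * P u)
          + ε * (L * Real.exp (L*u)) with hF'def
      set G' : ℝ → ℝ := fun u =>
        (β * P u * S u + α * a * γ * (S u * X u) / (S u + Δ) - μ * X u)
          + ε * (L * Real.exp (L*u)) with hG'def
      have hexp : ∀ u : ℝ, HasDerivAt (fun y : ℝ => ε * Real.exp (L*y))
          (ε * (L * Real.exp (L*u))) u := by
        intro u
        have h0 : HasDerivAt (fun y : ℝ => L * y) L u := by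
          simpa using (hasDerivAt_id u).const_mul L
        have h2 := (h0.exp).const_mul ε
        exact h2.congr_deriv (by ring)
      have hF : ∀ u, HasDerivAt F (F' u) u := fun u => (hP u).add (hexp u)
      have hG : ∀ u, HasDerivAt G (G' u) u := fun u => (hX u).add (hexp u)
      have hF0 : 0 < F 0 := by
        show 0 < P 0 + ε * Real.exp (L*0)
        rw [mul_zero, Real.exp_zero]
        linarith
      have hG0 : 0 < G 0 := by
        show 0 < X 0 + ε * Real.exp (L*0)
        rw [mul_zero, Real.exp_zero]
        linarith
      have keyf : ∀ u, 0 < u → u ≤ t → F u = 0 → 0 ≤ G u → 0 < F' u := by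
        intro u hu0 hut hFu hGu
        obtain ⟨δ, hδdef⟩ : ∃ δ : ℝ, δ = ε * Real.exp (L*u) := ⟨_, rfl⟩
        have hδ0 : 0 < δ := by rw [hδdef]; positivity
        have hPu : P u = -δ := by
          have h := hFu
          simp only [hFdef] at h
          rw [hδdef]
          linarith
        have hXu : -δ ≤ X u := by
          have h := hGu
          simp only [hGdef] at h
          rw [hδdef]
          linarith
        have hSu0 : 0 ≤ S u := stage1 u hu0.le hut
        have hden : 0 < S u + Δ := by linarith
        have he : ε * (L * Real.exp (L*u)) = L * δ := by rw [hδdef]; ring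
        have h1 : 0 ≤ -β * P u * S u := by
          rw [hPu]
          nlinarith [mul_nonneg (mul_nonneg hβ hδ0.le) hSu0]
        have h2 : 0 ≤ -(ω * P u) := by
          rw [hPu]
          nlinarith [mul_nonneg hω hδ0.le]
        have h3 : -(α*a*δ) ≤ α * a * (1-γ) * (S u * X u) / (S u + Δ) := by
          rw [le_div_iff₀ hden]
          nlinarith [mul_nonneg (mul_nonneg (mul_nonneg (mul_nonneg hα ha)
              (by linarith : (0:ℝ) ≤ 1-γ)) hSu0) (by linarith : 0 ≤ X u + δ),
            mul_nonneg (mul_nonneg (mul_nonneg (mul_nonneg hα ha) hγ0) hSu0) hδ0.le,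
            mul_nonneg (mul_nonneg (mul_nonneg hα ha) hδ0.le) hΔ.le]
        have hLδ : L * δ = α*a*δ + β*C*δ + δ := by rw [hLdef]; ring
        have hβCδ : 0 ≤ β*C*δ := by positivity
        show 0 < (-β * P u * S u + α * a * (1-γ) * (S u * X u) / (S u + Δ) - ω * P u)
          + ε * (L * Real.exp (L*u))
        rw [he]
        linarith
      have keyg : ∀ u, 0 < u → u ≤ t → G u = 0 → 0 ≤ F u → 0 < G' u := by
        intro u hu0 hut hGu hFu
        obtain ⟨δ, hδdef⟩ : ∃ δ : ℝ, δ = ε * Real.exp (L*u) := ⟨_, rfl⟩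
        have hδ0 : 0 < δ := by rw [hδdef]; positivity
        have hXu : X u = -δ := by
          have h := hGu
          simp only [hGdef] at h
          rw [hδdef]
          linarith
        have hPu : -δ ≤ P u := by
          have h := hFu
          simp only [hFdef] at h
          rw [hδdef]
          linarith
        have hSu0 : 0 ≤ S u := stage1 u hu0.le hut
        have hSuC : S u ≤ C := (le_abs_self _).trans (hSC u hu0.le hut)
        have hden : 0 < S u + Δ := by linarith
        have he : ε * (L * Real.exp (L*u)) = L * δ := by rw [hδdef]; ring
        have h1 : -(β*C*δ) ≤ β * P u * S u := by
          nlinarith [mul_nonneg (mul_nonneg hβ hSu0) (by linarith : 0 ≤ P u + δ),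
            mul_nonneg (mul_nonneg hβ hδ0.le) (by linarith : 0 ≤ C - S u)]
        have h2 : -(α*a*δ) ≤ α * a * γ * (S u * X u) / (S u + Δ) := by
          rw [le_div_iff₀ hden, hXu]
          nlinarith [mul_nonneg (mul_nonneg (mul_nonneg (mul_nonneg hα ha) hδ0.le) hSu0)
              (by linarith : (0:ℝ) ≤ 1-γ),
            mul_nonneg (mul_nonneg (mul_nonneg hα ha) hδ0.le) hΔ.le]
        have h3 : 0 ≤ -(μ * X u) := by
          rw [hXu]
          nlinarith [mul_nonneg hμ hδ0.le]
        have hLδ : L * δ = α*a*δ + β*C*δ + δ := by rw [hLdef]; ring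
        show 0 < (β * P u * S u + α * a * γ * (S u * X u) / (S u + Δ) - μ * X u)
          + ε * (L * Real.exp (L*u))
        rw [he]
        linarith
      exact pos_pair hF hG hF0 hG0 keyf keyg
    intro s hs0 hst
    constructor
    · by_contra hneg
      push_neg at hneg
      have hexps : 0 < Real.exp (L*s) := Real.exp_pos _
      obtain ⟨ε, hεdef⟩ : ∃ ε : ℝ, ε = (-P s)/(2*Real.exp (L*s)) := ⟨_, rfl⟩
      have hε0 : 0 < ε := by
        rw [hεdef]
        exact div_pos (by linarith) (by positivity)
      have hpos := (main ε hε0 s hs0 hst).1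
      have heq : ε * Real.exp (L*s) = (-P s)/2 := by
        rw [hεdef]
        field_simp
      rw [heq] at hpos
      linarith
    · by_contra hneg
      push_neg at hneg
      have hexps : 0 < Real.exp (L*s) := Real.exp_pos _
      obtain ⟨ε, hεdef⟩ : ∃ ε : ℝ, ε = (-X s)/(2*Real.exp (L*s)) := ⟨_, rfl⟩
      have hε0 : 0 < ε := by
        rw [hεdef]
        exact div_pos (by linarith) (by positivity)
      have hpos := (main ε hε0 s hs0 hst).2
      have heq : ε * Real.exp (L*s) = (-X s)/2 := by
        rw [hεdef]
        field_simp
      rw [heq] at hpos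
      linarith
  -- Stage 3 : `S t ≤ max (S 0) K`.
  have stage3 : S t ≤ max (S 0) K := by
    by_contra hgt
    push_neg at hgt
    set M := max (S 0) K with hMdef
    have hKM : K ≤ M := le_max_right _ _
    set B : Set ℝ := (Icc 0 t) ∩ {u | S u ≤ M} with hBdef
    have hBne : B.Nonempty :=
      ⟨0, ⟨le_refl 0, ht⟩, by simp only [mem_setOf_eq, hMdef]; exact le_max_left _ _⟩
    have hBbdd : BddAbove B := ⟨t, fun x hx => hx.1.2⟩
    have hBclosed : IsClosed B := isClosed_Icc.inter (isClosed_le hSc continuous_const)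
    set t₂ := sSup B with ht₂def
    have ht₂B : t₂ ∈ B := hBclosed.csSup_mem hBne hBbdd
    have ht₂0 : 0 ≤ t₂ := ht₂B.1.1
    have ht₂t : t₂ ≤ t := ht₂B.1.2
    have ht₂M : S t₂ ≤ M := ht₂B.2
    have hmid : ∀ u, t₂ < u → u ≤ t → M < S u := by
      intro u h1 h2
      by_contra hc
      push_neg at hc
      have huB : u ∈ B := ⟨⟨le_trans ht₂0 h1.le, h2⟩, hc⟩
      exact absurd (le_csSup hBbdd huB) (not_le.mpr h1)
    have hanti : AntitoneOn S (Icc t₂ t) := by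
      apply antitoneOn_of_deriv_nonpos (convex_Icc _ _) hSc.continuousOn
      · intro u hu
        exact (hS u).differentiableAt.differentiableWithinAt
      · intro u hu
        rw [interior_Icc] at hu
        have hu0 : 0 ≤ u := le_trans ht₂0 hu.1.le
        have hut : u ≤ t := hu.2.le
        have hSu := hmid u hu.1 hut
        have hXu := (stage2 u hu0 hut).2
        have hρu := hρ u
        rw [(hS u).deriv]
        have hSuK : K ≤ S u := by linarith
        have h1 : ρ u * S u * (1 - S u / K) ≤ 0 := by
          have ha1 : 1 ≤ S u / K := (one_le_div hK).mpr hSuK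
          have ha2 : 0 ≤ ρ u * S u := mul_nonneg hρu.1 (by linarith)
          nlinarith
        have h2 : 0 ≤ a * (S u * X u) / (S u + Δ) :=
          div_nonneg (mul_nonneg ha (mul_nonneg (by linarith) hXu)) (by linarith)
        linarith
    have hfin := hanti ⟨le_refl t₂, ht₂t⟩ ⟨ht₂t, le_refl t⟩ ht₂t
    linarith
  exact ⟨(stage2 t ht le_rfl).1, stage1 t ht le_rfl, (stage2 t ht le_rfl).2, stage3⟩
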